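/- Let m be an odd positive integer. For every C ∈ R, the number of quadruples (X,Y,Z,W) ∈ 𝒯⁴ with X + Y + Z + W = C equals 2^m if C = 0; equals 2^m(2^m + 1) if C ∈ 2R and C ≠ 0; and equals 2^{2m} if C ∉ 2R. -/

import Mathlib

open Polynomial
open scoped Classical

set_option linter.unusedSectionVars false

section FieldCount
variable {K : Type*} [Field K] [Fintype K]

lemma two_eq_zero_of_card (m : ℕ) (hmpos : 0 < m) (hcard : Fintype.card K = 2 ^ m) :
    (2 : K) = 0 := by
  have h := FiniteField.cast_card_eq_zero K
  rw [hcard] at h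
  have h2 : ((2 : K)) ^ m = 0 := by
    have : (((2:ℕ) ^ m : ℕ) : K) = (2:K) ^ m := by push_cast; ring
    rw [← this, h]
  exact pow_eq_zero_iff hmpos.ne' |>.mp h2

lemma one_notin_AS (m : ℕ) (hm : Odd m) (hcard : Fintype.card K = 2 ^ m)
    (h2 : (2:K) = 0) : ¬ ∃ z : K, z * z + z = 1 := by
  rintro ⟨z, hz⟩
  have hz3 : z ^ 3 = 1 := by linear_combination (z + 1) * hz - z * z * h2
  have hz1 : z ≠ 1 := by
    rintro rfl
    exact one_ne_zero (by linear_combination hz : (1:K) = 0)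
  have hzu : z * z ^ 2 = 1 := by rw [← pow_succ']; exact hz3
  set ζ : Kˣ := Units.mkOfMulEqOne z (z ^ 2) hzu with hζ
  have hζz : (ζ : K) = z := rfl
  have hζ3 : ζ ^ 3 = 1 := by
    ext
    push_cast
    rw [hζz]; exact hz3
  have hζ1 : ζ ≠ 1 := fun h => hz1 (by rw [← hζz, h]; rfl)
  have hord : orderOf ζ = 3 := orderOf_eq_prime hζ3 hζ1
  have hdvd : (3:ℕ) ∣ Fintype.card Kˣ := hord ▸ orderOf_dvd_card
  rw [Fintype.card_units, hcard] at hdvd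
  have h3 : ((2 ^ m - 1 : ℕ) : ZMod 3) = 0 :=
    (ZMod.natCast_eq_zero_iff _ _).mpr hdvd
  rw [Nat.cast_sub Nat.one_le_two_pow] at h3
  push_cast at h3
  have hneg : (2 : ZMod 3) = -1 := by decide
  rw [hneg, hm.neg_one_pow] at h3
  exact absurd h3 (by decide)

noncomputable def AShom (h2 : (2:K) = 0) : K →+ K :=
  AddMonoidHom.mk' (fun z => z * z + z) (by intro a b; linear_combination a * b * h2)

lemma AShom_apply (h2 : (2:K) = 0) (z : K) : AShom h2 z = z * z + z := rfl

lemma sq_inj (h2 : (2:K) = 0) {z w : K} (h : z * z = w * w) : z = w := by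
  have h0 : (z - w) ^ 2 = 0 := by linear_combination h + (w * w - z * w) * h2
  have := pow_eq_zero_iff (n := 2) (by norm_num) |>.mp h0
  exact sub_eq_zero.mp this

lemma AScard (m : ℕ) (hmpos : 0 < m) (hcard : Fintype.card K = 2 ^ m) (h2 : (2:K) = 0) :
    Nat.card (AShom h2).range = 2 ^ (m - 1) := by
  have hkerset : ((AShom h2).ker : Set K) = {0, 1} := by
    ext z
    simp only [AddMonoidHom.mem_ker, SetLike.mem_coe, AShom_apply, Set.mem_insert_iff,
      Set.mem_singleton_iff]
    constructor
    · intro h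
      have hfac : z * (z + 1) = 0 := by linear_combination h
      rcases mul_eq_zero.mp hfac with h' | h'
      · exact Or.inl h'
      · exact Or.inr (by linear_combination h' - h2)
    · rintro (rfl | rfl)
      · ring
      · linear_combination h2
  have hker : Nat.card (AShom h2).ker = 2 := by
    rw [← SetLike.coe_sort_coe, Nat.card_coe_set_eq, hkerset,
      Set.ncard_pair (zero_ne_one (α := K))]
  have hlag : Nat.card K = Nat.card (K ⧸ (AShom h2).ker) * Nat.card (AShom h2).ker :=
    AddSubgroup.card_eq_card_quotient_mul_card_addSubgroup _
  have hq : Nat.card (K ⧸ (AShom h2).ker) = Nat.card (AShom h2).range :=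
    Nat.card_congr (QuotientAddGroup.quotientKerEquivRange (AShom h2)).toEquiv
  rw [hq, hker, Nat.card_eq_fintype_card, hcard] at hlag
  have hm2 : 2 ^ m = 2 ^ (m - 1) * 2 := by
    rw [← pow_succ, Nat.sub_add_cancel hmpos]
  omega

lemma fiber_card (h2 : (2:K) = 0) (hone : ¬ ∃ z : K, z * z + z = 1) (a be x y : K) :
    Fintype.card {z : K // z * z + (a + x + y) * z +
        (be ^ 2 + x * y + (x + y) * (a + x + y)) = 0} =
      if a + x + y = 0 then 1
      else if (a * (x + (a + x + y)) + be * (a + x + y)) / ((a + x + y) * (a + x + y)) + 1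
          ∈ (AShom h2).range then 2 else 0 := by
  by_cases hu : a + x + y = 0
  · rw [if_pos hu]
    have hsurj : Function.Surjective (fun z : K => z * z) :=
      Finite.surjective_of_injective (fun z w h => sq_inj h2 h)
    obtain ⟨z₁, hz₁⟩ := hsurj (be ^ 2 + x * y + (x + y) * (a + x + y))
    refine Fintype.card_eq_one_iff.mpr ⟨⟨z₁, ?_⟩, ?_⟩
    · simp only at hz₁
      rw [hu, zero_mul, add_zero]
      linear_combination hz₁ + (be ^ 2 + x * y) * h2 + (x + y) * hu
    · rintro ⟨z', hz'⟩
      refine Subtype.ext ?_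
      simp only
      rw [hu, zero_mul, add_zero] at hz'
      refine sq_inj h2 ?_
      simp only at hz₁
      linear_combination hz' - hz₁ - (be ^ 2 + x * y) * h2 - (x + y) * hu
  · rw [if_neg hu]
    set u := a + x + y with hudef
    set v := be ^ 2 + x * y + (x + y) * u with hvdef
    set N := a * (x + u) + be * u with hNdef
    have huu : u * u ≠ 0 := mul_ne_zero hu hu
    by_cases hW : N / (u * u) + 1 ∈ (AShom h2).range
    · rw [if_pos hW]
      obtain ⟨t₀, ht₀⟩ := hW
      rw [AShom_apply] at ht₀
      have ht' : (t₀ * t₀ + t₀) * (u * u) = N + u * u := by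
        rw [ht₀]; field_simp
      set z₀ := x + be + u * t₀ with hz₀def
      have hz₀ : z₀ * z₀ + u * z₀ + v = 0 := by
        rw [hz₀def, hvdef, hNdef] at *
        linear_combination ht' + (a*be + a*be*t₀ + a*t₀*x + 3*a*x + 2*a*y + a^2 + be*t₀*x
          + be*t₀*y + 2*be*x + be*y + be^2 + t₀*x*y + t₀*x^2 + 3*x*y + 2*x^2 + y^2) * h2
      have hset : ∀ z : K, (z * z + u * z + v = 0) ↔ (z = z₀ ∨ z = z₀ + u) := by
        intro z
        constructor
        · intro hz
          have hfac : (z + z₀) * (z + z₀ + u) = 0 := by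
            rw [hvdef] at hz hz₀
            linear_combination hz + hz₀ + (-a*x - a*y - be^2 + (-3)*x*y - x^2 - y^2 + z*z₀) * h2
          rcases mul_eq_zero.mp hfac with h | h
          · exact Or.inl (by linear_combination h - z₀ * h2)
          · exact Or.inr (by linear_combination h - (z₀ + u) * h2)
        · rintro (rfl | rfl)
          · exact hz₀
          · linear_combination hz₀ + (z₀ + u) * (u * h2) - u * u * h2 + u * u * h2
      have : (Finset.univ.filter fun z : K => z * z + u * z + v = 0) = {z₀, z₀ + u} := by
        ext z
        simp [hset z]
      rw [Fintype.card_subtype, this, Finset.card_pair (fun h => hu (add_eq_left.mp h.symm))]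
    · rw [if_neg hW]
      refine Fintype.card_eq_zero_iff.mpr ⟨fun ⟨z, hz⟩ => hW ⟨(z + x + be) / u, ?_⟩⟩
      rw [AShom_apply]
      have hL : ((z + x + be) / u * ((z + x + be) / u) + (z + x + be) / u) * (u * u)
          = (z + x + be) * (z + x + be) + u * (z + x + be) := by
        field_simp
      have hR : (N / (u * u) + 1) * (u * u) = N + u * u := by field_simp
      refine mul_right_cancel₀ huu ?_
      rw [hL, hR, hNdef]
      rw [hvdef] at hz
      linear_combination hz + ((-2)*a*x + (-2)*a*y - a^2 + be*x + be*z + (-2)*x*y + x*z - y^2) * h2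

end FieldCount

section FC3
variable {K : Type*} [Field K] [Fintype K]

lemma field_count (m : ℕ) (hm : Odd m) (hmpos : 0 < m)
    (hcard : Fintype.card K = 2 ^ m) (a be : K) :
    Nat.card {s : K × K × K × K // s.1 + s.2.1 + s.2.2.1 + s.2.2.2 = a ∧
      s.1 * s.2.1 + s.1 * s.2.2.1 + s.1 * s.2.2.2 + s.2.1 * s.2.2.1 + s.2.1 * s.2.2.2 +
        s.2.2.1 * s.2.2.2 = be ^ 2} =
      if a = 0 ∧ be = 0 then 2 ^ m else if a = 0 then 2 ^ m * (2 ^ m + 1)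
      else 2 ^ (2 * m) := by
  have h2 : (2:K) = 0 := two_eq_zero_of_card m hmpos hcard
  have hone : ¬ ∃ z : K, z * z + z = 1 := one_notin_AS m hm hcard h2
  -- step 1: sigma decomposition
  let Fib : K × K → Type _ := fun p => {z : K // z * z + (a + p.1 + p.2) * z +
      (be ^ 2 + p.1 * p.2 + (p.1 + p.2) * (a + p.1 + p.2)) = 0}
  let E1 : {s : K × K × K × K // s.1 + s.2.1 + s.2.2.1 + s.2.2.2 = a ∧
      s.1 * s.2.1 + s.1 * s.2.2.1 + s.1 * s.2.2.2 + s.2.1 * s.2.2.1 + s.2.1 * s.2.2.2 +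
        s.2.2.1 * s.2.2.2 = be ^ 2} ≃ Σ p : K × K, Fib p :=
    { toFun := fun s => ⟨(s.1.1, s.1.2.1), ⟨s.1.2.2.1, by
        obtain ⟨⟨x, y, z, w⟩, h1, he⟩ := s
        simp only [Fib]
        linear_combination he - (x + y + z) * h1 +
          (be ^ 2 + 2*x*y + x*z + x^2 + y*z + y^2 + z^2) * h2⟩⟩
      invFun := fun q => ⟨(q.1.1, q.1.2, q.2.1, a + q.1.1 + q.1.2 + q.2.1),
        by linear_combination (q.1.1 + q.1.2 + q.2.1) * h2,
        by linear_combination q.2.2 + (q.1.1 * q.2.1 + q.1.2 * q.2.1 - be ^ 2) * h2⟩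
      left_inv := fun s => by
        obtain ⟨⟨x, y, z, w⟩, h1, he⟩ := s
        refine Subtype.ext ?_
        simp only [Prod.mk.injEq, true_and]
        linear_combination (x + y + z) * h2 - h1
      right_inv := fun q => rfl }
  rw [Nat.card_congr E1, Nat.card_eq_fintype_card, Fintype.card_sigma]
  have hfib : ∀ p : K × K, Fintype.card (Fib p) =
      if a + p.1 + p.2 = 0 then 1
      else if (a * (p.1 + (a + p.1 + p.2)) + be * (a + p.1 + p.2)) /
          ((a + p.1 + p.2) * (a + p.1 + p.2)) + 1 ∈ (AShom h2).range then 2 else 0 :=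
    fun p => fiber_card h2 hone a be p.1 p.2
  rw [Finset.sum_congr rfl (fun p _ => hfib p)]
  rw [Finset.sum_ite, Finset.sum_const, Finset.sum_ite, Finset.sum_const,
    Finset.sum_const_zero, Finset.filter_filter, add_zero, smul_eq_mul, mul_one, smul_eq_mul]
  have hcard1 : (Finset.univ.filter fun p : K × K => a + p.1 + p.2 = 0).card = 2 ^ m := by
    rw [← Fintype.card_subtype]
    rw [Fintype.card_congr
      { toFun := fun q => q.1.1
        invFun := fun x => ⟨(x, a + x), by linear_combination (a + x) * h2⟩
        left_inv := fun q => by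
          obtain ⟨⟨x, y⟩, h⟩ := q
          refine Subtype.ext ?_
          simp only [Prod.mk.injEq, true_and]
          linear_combination h - y * h2
        right_inv := fun x => rfl : {p : K × K // a + p.1 + p.2 = 0} ≃ K }]
    exact hcard
  have hrange : Fintype.card (AShom h2).range = 2 ^ (m - 1) := by
    rw [← Nat.card_eq_fintype_card]; exact AScard m hmpos hcard h2
  have hsne : ∀ s : K, s ∈ (AShom h2).range → s + 1 ≠ 0 := by
    rintro s ⟨t, ht⟩ h
    exact hone ⟨t, by rw [AShom_apply] at ht; linear_combination ht + h - h2⟩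
  rw [hcard1]
  by_cases ha : a = 0
  · by_cases hbe : be = 0
    · rw [if_pos ⟨ha, hbe⟩]
      have hempty : (Finset.univ.filter fun p : K × K => ¬(a + p.1 + p.2 = 0) ∧
          (a * (p.1 + (a + p.1 + p.2)) + be * (a + p.1 + p.2)) /
            ((a + p.1 + p.2) * (a + p.1 + p.2)) + 1 ∈ (AShom h2).range) = ∅ := by
        refine Finset.filter_eq_empty_iff.mpr ?_
        rintro p - ⟨hu, hW⟩
        rw [ha, hbe] at hW
        rw [zero_mul, zero_mul, add_zero, zero_div, zero_add] at hW
        obtain ⟨t, ht⟩ := hW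
        exact hone ⟨t, ht⟩
      rw [hempty]
      simp
    · rw [if_neg (fun h => hbe h.2), if_pos ha]
      have he1 : ∀ x s : K, a + x + (x + be / (s + 1)) = be / (s + 1) := fun x s => by
        linear_combination ha + x * h2
      have he2 : ∀ x s : K, s ∈ (AShom h2).range →
          (a * (x + (a + x + (x + be / (s + 1)))) + be * (a + x + (x + be / (s + 1)))) /
            ((a + x + (x + be / (s + 1))) * (a + x + (x + be / (s + 1)))) + 1 = s := by
        intro x s hs
        rw [he1 x s]
        have hs1 : s + 1 ≠ 0 := hsne s hs
        have hbu : be = (s + 1) * (be / (s + 1)) := by field_simp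
        have hN : a * (x + be / (s + 1)) + be * (be / (s + 1)) =
            (s + 1) * (be / (s + 1) * (be / (s + 1))) := by
          linear_combination (x + be / (s + 1)) * ha + (be / (s + 1)) * hbu
        rw [hN, mul_div_cancel_right₀ _ (mul_ne_zero (div_ne_zero hbe hs1) (div_ne_zero hbe hs1))]
        linear_combination h2
      have EB : {p : K × K // ¬(a + p.1 + p.2 = 0) ∧
          (a * (p.1 + (a + p.1 + p.2)) + be * (a + p.1 + p.2)) /
            ((a + p.1 + p.2) * (a + p.1 + p.2)) + 1 ∈ (AShom h2).range} ≃
          K × (AShom h2).range :=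
        { toFun := fun q => (q.1.1, ⟨_, q.2.2⟩)
          invFun := fun r => ⟨(r.1, r.1 + be / ((r.2 : K) + 1)),
            by rw [he1 r.1 (r.2 : K)]; exact div_ne_zero hbe (hsne _ r.2.2),
            by rw [he2 r.1 (r.2 : K) r.2.2]; exact r.2.2⟩
          left_inv := fun q => by
            obtain ⟨⟨x, y⟩, hu, hW⟩ := q
            refine Subtype.ext ?_
            simp only [Prod.mk.injEq, true_and]
            have hNu : (a * (x + (a + x + y)) + be * (a + x + y)) /
                ((a + x + y) * (a + x + y)) = be / (a + x + y) := by
              rw [div_eq_div_iff (mul_ne_zero hu hu) hu]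
              linear_combination ((x + (a + x + y)) * (a + x + y)) * ha
            have hs0 : (a * (x + (a + x + y)) + be * (a + x + y)) /
                ((a + x + y) * (a + x + y)) + 1 + 1 = be / (a + x + y) := by
              linear_combination hNu + h2
            rw [hs0]
            have hinv : be / (be / (a + x + y)) = a + x + y := by
              rw [div_div_eq_mul_div, mul_comm, mul_div_assoc, div_self hbe, mul_one]
            rw [hinv]
            linear_combination ha + x * h2
          right_inv := fun r => by
            obtain ⟨x, s, hs⟩ := r
            simp only [Prod.mk.injEq, true_and]
            exact Subtype.ext (he2 x s hs) }
      have hcard2 : (Finset.univ.filter fun p : K × K => ¬(a + p.1 + p.2 = 0) ∧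
          (a * (p.1 + (a + p.1 + p.2)) + be * (a + p.1 + p.2)) /
            ((a + p.1 + p.2) * (a + p.1 + p.2)) + 1 ∈ (AShom h2).range).card =
          2 ^ m * 2 ^ (m - 1) := by
        rw [← Fintype.card_subtype, Fintype.card_congr EB, Fintype.card_prod, hcard, hrange]
      rw [hcard2, mul_assoc]
      have h2m : 2 ^ (m - 1) * 2 = 2 ^ m := by
        rw [← pow_succ, Nat.sub_add_cancel hmpos]
      rw [h2m]; ring
  · rw [if_neg (fun h => ha h.1), if_neg ha]
    have he1 : ∀ u s : K,
        a + ((s + 1) * u * u + be * u + a * u) / a +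
          (a + ((s + 1) * u * u + be * u + a * u) / a + u) = u := fun u s => by
      linear_combination (a + ((s + 1) * u * u + be * u + a * u) / a) * h2
    have hax : ∀ u s : K, a * (((s + 1) * u * u + be * u + a * u) / a) =
        (s + 1) * (u * u) + be * u + a * u := fun u s => by
      field_simp
    have he2 : ∀ u s : K, u ≠ 0 →
        (a * (((s + 1) * u * u + be * u + a * u) / a +
            (a + ((s + 1) * u * u + be * u + a * u) / a +
              (a + ((s + 1) * u * u + be * u + a * u) / a + u))) +
          be * (a + ((s + 1) * u * u + be * u + a * u) / a +
            (a + ((s + 1) * u * u + be * u + a * u) / a + u))) /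
          ((a + ((s + 1) * u * u + be * u + a * u) / a +
            (a + ((s + 1) * u * u + be * u + a * u) / a + u)) *
           (a + ((s + 1) * u * u + be * u + a * u) / a +
            (a + ((s + 1) * u * u + be * u + a * u) / a + u))) + 1 = s := by
      intro u s hu
      rw [he1 u s]
      have hN : a * (((s + 1) * u * u + be * u + a * u) / a + u) + be * u =
          (s + 1) * (u * u) := by
        linear_combination hax u s + (a * u + be * u) * h2
      rw [hN, mul_div_cancel_right₀ _ (mul_ne_zero hu hu)]
      linear_combination h2
    have EA : {p : K × K // ¬(a + p.1 + p.2 = 0) ∧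
        (a * (p.1 + (a + p.1 + p.2)) + be * (a + p.1 + p.2)) /
          ((a + p.1 + p.2) * (a + p.1 + p.2)) + 1 ∈ (AShom h2).range} ≃
        {u : K // ¬(u = 0)} × (AShom h2).range :=
      { toFun := fun q => (⟨a + q.1.1 + q.1.2, q.2.1⟩, ⟨_, q.2.2⟩)
        invFun := fun r => ⟨((((r.2 : K) + 1) * (r.1 : K) * (r.1 : K) + be * (r.1 : K) +
            a * (r.1 : K)) / a,
            a + (((r.2 : K) + 1) * (r.1 : K) * (r.1 : K) + be * (r.1 : K) +
              a * (r.1 : K)) / a + (r.1 : K)),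
          by rw [he1 (r.1 : K) (r.2 : K)]; exact r.1.2,
          by rw [he2 (r.1 : K) (r.2 : K) r.1.2]; exact r.2.2⟩
        left_inv := fun q => by
          obtain ⟨⟨x, y⟩, hu, hW⟩ := q
          refine Subtype.ext ?_
          simp only [Prod.mk.injEq]
          have hs1 : (((a * (x + (a + x + y)) + be * (a + x + y)) /
              ((a + x + y) * (a + x + y)) + 1) + 1) * ((a + x + y) * (a + x + y)) =
              a * (x + (a + x + y)) + be * (a + x + y) + ((a + x + y) * (a + x + y)) * 2 := by
            field_simp
            ring
          have hx : ((((a * (x + (a + x + y)) + be * (a + x + y)) /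
              ((a + x + y) * (a + x + y)) + 1) + 1) * (a + x + y) * (a + x + y) + be * (a + x + y) +
              a * (a + x + y)) / a = x := by
            refine mul_left_cancel₀ ha ?_
            rw [hax (a + x + y) _]
            linear_combination hs1 + (a * (a + x + y) + be * (a + x + y) +
              (a + x + y) * (a + x + y)) * h2
          constructor
          · exact hx
          · rw [hx]
            linear_combination (a + x) * h2
        right_inv := fun r => by
          obtain ⟨⟨u, hu⟩, s, hs⟩ := r
          simp only [Prod.mk.injEq]
          exact ⟨Subtype.ext (he1 u s), Subtype.ext (he2 u s hu)⟩ }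
    have hcard2 : (Finset.univ.filter fun p : K × K => ¬(a + p.1 + p.2 = 0) ∧
        (a * (p.1 + (a + p.1 + p.2)) + be * (a + p.1 + p.2)) /
          ((a + p.1 + p.2) * (a + p.1 + p.2)) + 1 ∈ (AShom h2).range).card =
        (2 ^ m - 1) * 2 ^ (m - 1) := by
      rw [← Fintype.card_subtype, Fintype.card_congr EA, Fintype.card_prod, hrange]
      congr 1
      rw [Fintype.card_subtype_compl, Fintype.card_subtype_eq, hcard]
    rw [hcard2, mul_assoc]
    have h2m : 2 ^ (m - 1) * 2 = 2 ^ m := by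
      rw [← pow_succ, Nat.sub_add_cancel hmpos]
    rw [h2m, two_mul, pow_add, Nat.sub_one_mul]
    have hle : 2 ^ m ≤ 2 ^ m * 2 ^ m := Nat.le_mul_of_pos_left _ (Nat.pow_pos (n := m) (by norm_num))
    exact Nat.add_sub_cancel' hle

end FC3

lemma pow_congr_of_four {R : Type*} [CommRing R] (h4 : (4:R) = 0) (m : ℕ) (hm : 0 < m)
    (y d : R) : (y + 2*d)^(2^m) = y^(2^m) := by
  have hsq : (y + 2*d)^2 = y^2 := by linear_combination (y*d + d*d) * h4
  have h2m : 2^m = 2 * 2^(m-1) := by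
    rw [← pow_succ', Nat.sub_add_cancel hm]
  rw [h2m, pow_mul, hsq, ← pow_mul]

lemma keypow {R : Type*} [CommRing R] (h4 : (4:R) = 0) :
    ∀ (j : ℕ) (X Y Z W : R), (X+Y+Z+W)^(2^(j+1)) =
      X^(2^(j+1)) + Y^(2^(j+1)) + Z^(2^(j+1)) + W^(2^(j+1)) +
      2 * (X^(2^j)*Y^(2^j) + X^(2^j)*Z^(2^j) + X^(2^j)*W^(2^j) + Y^(2^j)*Z^(2^j) +
           Y^(2^j)*W^(2^j) + Z^(2^j)*W^(2^j)) := by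
  intro j
  induction j with
  | zero =>
    intro X Y Z W
    norm_num
    ring
  | succ n ih =>
    intro X Y Z W
    have h1 : (2:ℕ)^(n+1+1) = 2^(n+1) * 2 := by ring
    have hsq : ∀ (A B : R), (A + 2*B)^2 = A^2 := fun A B => by
      linear_combination (A*B + B*B) * h4
    rw [h1, pow_mul, ih X Y Z W, hsq]
    rw [pow_mul X, pow_mul Y, pow_mul Z, pow_mul W]
    ring


set_option maxHeartbeats 2000000 in
/-- With `R = GR(4,m)` realized as `(ℤ/4ℤ)[x]/(f)` and
`𝒯 = {z : z ^ 2^m = z}` the Teichmüller set (`m` odd), for every `C ∈ R` the number of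
quadruples `(X,Y,Z,W) ∈ 𝒯⁴` with `X + Y + Z + W = C` equals `2^m` if `C = 0`,
`2^m (2^m + 1)` if `C ∈ 2R ∖ {0}`, and `2^(2m)` if `C ∉ 2R`. -/
theorem statement6 (m : ℕ) (hm : Odd m) (hmpos : 0 < m)
    (f : Polynomial (ZMod 4)) (hmonic : f.Monic) (hdeg : f.natDegree = m)
    (hirr : Irreducible (f.map (ZMod.castHom (show (2:ℕ) ∣ 4 by norm_num) (ZMod 2))))
    (C : AdjoinRoot f) :
    Nat.card {t : AdjoinRoot f × AdjoinRoot f × AdjoinRoot f × AdjoinRoot f //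
        t.1 ^ 2 ^ m = t.1 ∧ t.2.1 ^ 2 ^ m = t.2.1 ∧ t.2.2.1 ^ 2 ^ m = t.2.2.1 ∧
        t.2.2.2 ^ 2 ^ m = t.2.2.2 ∧
        t.1 + t.2.1 + t.2.2.1 + t.2.2.2 = C} =
      if C = 0 then 2 ^ m
      else if ∃ x : AdjoinRoot f, C = 2 * x then 2 ^ m * (2 ^ m + 1)
      else 2 ^ (2 * m) := by
  haveI hfact : Fact (Irreducible (f.map (ZMod.castHom (show (2:ℕ) ∣ 4 by norm_num)
    (ZMod 2)))) := ⟨hirr⟩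
  set c2 : ZMod 4 →+* ZMod 2 := ZMod.castHom (show (2:ℕ) ∣ 4 by norm_num) (ZMod 2) with hc2
  set f2 : Polynomial (ZMod 2) := f.map c2 with hf2
  -- characteristic facts
  have h4 : (4 : AdjoinRoot f) = 0 := by
    have : ((4:ℕ) : AdjoinRoot f) = AdjoinRoot.of f ((4:ℕ) : ZMod 4) := by
      rw [map_natCast]
    have h40 : ((4:ℕ) : ZMod 4) = 0 := by decide
    rw [show ((4:ℕ) : AdjoinRoot f) = (4 : AdjoinRoot f) by norm_num] at this
    rw [this, h40, map_zero]
  -- the residue field K' = AdjoinRoot f2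
  have hf2monic : f2.Monic := hmonic.map c2
  have hf2deg : f2.natDegree = m := by rw [hf2, hmonic.natDegree_map, hdeg]
  have hf2ne : f2 ≠ 0 := hirr.ne_zero
  letI : Fintype (AdjoinRoot f2) :=
    Fintype.ofEquiv _ (AdjoinRoot.powerBasis hf2ne).basis.equivFun.toEquiv.symm
  have hcardK' : Fintype.card (AdjoinRoot f2) = 2 ^ m := by
    rw [Fintype.card_congr (AdjoinRoot.powerBasis hf2ne).basis.equivFun.toEquiv]
    rw [Fintype.card_fun, ZMod.card, Fintype.card_fin]
    show 2 ^ f2.natDegree = 2 ^ m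
    rw [hf2deg]
  -- the projection ψ
  have hev : f.eval₂ ((AdjoinRoot.of f2).comp c2) (AdjoinRoot.root f2) = 0 := by
    rw [← Polynomial.eval₂_map]
    exact AdjoinRoot.eval₂_root f2
  set ψ : AdjoinRoot f →+* AdjoinRoot f2 :=
    AdjoinRoot.lift ((AdjoinRoot.of f2).comp c2) (AdjoinRoot.root f2) hev with hψ
  have hψmk : ∀ g : Polynomial (ZMod 4), ψ (AdjoinRoot.mk f g) = AdjoinRoot.mk f2 (g.map c2) := by
    intro g
    rw [hψ, AdjoinRoot.lift_mk, ← AdjoinRoot.aeval_eq, aeval_def, ← AdjoinRoot.algebraMap_eq,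
      Polynomial.eval₂_map]
  have hc2surj : Function.Surjective c2 := by
    intro b
    fin_cases b
    · exact ⟨0, rfl⟩
    · exact ⟨1, rfl⟩
  have hψsurj : Function.Surjective ψ := by
    intro t
    obtain ⟨p, rfl⟩ := AdjoinRoot.mk_surjective t
    obtain ⟨g, rfl⟩ := Polynomial.map_surjective c2 hc2surj p
    exact ⟨AdjoinRoot.mk f g, hψmk g⟩
  have hdvd2 : ∀ c : ZMod 4, c2 c = 0 → 2 ∣ c := by
    intro c
    fin_cases c
    · exact fun _ => ⟨0, rfl⟩
    · exact fun h => absurd h (by decide)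
    · exact fun _ => ⟨1, rfl⟩
    · exact fun h => absurd h (by decide)
  have hCdvd : ∀ g : Polynomial (ZMod 4), g.map c2 = 0 → (Polynomial.C 2 : Polynomial (ZMod 4)) ∣ g := by
    intro g hg
    rw [Polynomial.C_dvd_iff_dvd_coeff]
    intro i
    apply hdvd2
    rw [← Polynomial.coeff_map, hg, Polynomial.coeff_zero]
  have hmkC2 : AdjoinRoot.mk f (Polynomial.C 2) = (2 : AdjoinRoot f) := by
    rw [AdjoinRoot.mk_C]
    exact map_ofNat _ 2
  -- the ideal I = (2) and quotient field
  set I : Ideal (AdjoinRoot f) := Ideal.span {(2 : AdjoinRoot f)} with hI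
  haveI : CharP (AdjoinRoot f2) 2 :=
    charP_of_injective_ringHom (algebraMap (ZMod 2) (AdjoinRoot f2)).injective 2
  have hK'2 : (2 : AdjoinRoot f2) = 0 := by
    have := CharP.cast_eq_zero (AdjoinRoot f2) 2
    rwa [Nat.cast_ofNat] at this
  have hIψ : ∀ r ∈ I, ψ r = 0 := by
    intro r hr
    obtain ⟨s, rfl⟩ := Ideal.mem_span_singleton'.mp hr
    rw [map_mul, map_ofNat, hK'2, mul_zero]
  have hkerψ : ∀ r, ψ r = 0 → r ∈ I := by
    intro r h
    obtain ⟨g, rfl⟩ := AdjoinRoot.mk_surjective r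
    rw [hψmk] at h
    obtain ⟨hb, hh⟩ := AdjoinRoot.mk_eq_zero.mp h
    obtain ⟨h₁, rfl⟩ := Polynomial.map_surjective c2 hc2surj hb
    have hmap0 : (g - f * h₁).map c2 = 0 := by
      rw [Polynomial.map_sub, Polynomial.map_mul, hh, ← hf2]
      ring
    obtain ⟨w, hw⟩ := hCdvd _ hmap0
    have hg2 : AdjoinRoot.mk f g = 2 * AdjoinRoot.mk f w := by
      have h7 := congrArg (AdjoinRoot.mk f) hw
      rwa [map_sub, map_mul, AdjoinRoot.mk_self, zero_mul, sub_zero, map_mul, hmkC2] at h7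
    rw [hg2]
    exact Ideal.mem_span_singleton'.mpr ⟨AdjoinRoot.mk f w, by ring⟩
  set π : AdjoinRoot f →+* AdjoinRoot f ⧸ I := Ideal.Quotient.mk I with hπd
  set ψb : AdjoinRoot f ⧸ I →+* AdjoinRoot f2 := Ideal.Quotient.lift I ψ hIψ with hψb
  have hψbmk : ∀ r, ψb (π r) = ψ r := fun r => Ideal.Quotient.lift_mk I ψ hIψ
  have hψbbij : Function.Bijective ψb := by
    constructor
    · intro x y hxy
      obtain ⟨r, rfl⟩ := Ideal.Quotient.mk_surjective x
      obtain ⟨r', rfl⟩ := Ideal.Quotient.mk_surjective y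
      have hrr : ψ r = ψ r' := by rw [← hψbmk, ← hψbmk]; exact hxy
      have : ψ (r - r') = 0 := by rw [map_sub, hrr, sub_self]
      exact Ideal.Quotient.eq.mpr (hkerψ _ this)
    · intro t
      obtain ⟨r, hr⟩ := hψsurj t
      exact ⟨π r, by rw [hψbmk, hr]⟩
  set e : (AdjoinRoot f ⧸ I) ≃+* AdjoinRoot f2 := RingEquiv.ofBijective ψb hψbbij with he
  letI : Field (AdjoinRoot f ⧸ I) :=
    (MulEquiv.isField (Field.toIsField (AdjoinRoot f2)) e.toMulEquiv).toField
  letI : Fintype (AdjoinRoot f ⧸ I) := Fintype.ofEquiv _ e.symm.toEquiv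
  have hcardk : Fintype.card (AdjoinRoot f ⧸ I) = 2 ^ m := by
    rw [Fintype.card_congr e.toEquiv, hcardK']
  have hπ2 : π (2 : AdjoinRoot f) = 0 :=
    Ideal.Quotient.eq_zero_iff_mem.mpr (Ideal.mem_span_singleton.mpr dvd_rfl)
  have h2k : (2 : AdjoinRoot f ⧸ I) = 0 := by
    rw [← map_ofNat π 2]; exact hπ2
  -- torsion lemma
  have hdvd2' : ∀ c : ZMod 4, 2 * c = 0 → 2 ∣ c := by
    intro c
    fin_cases c
    · exact fun _ => ⟨0, rfl⟩
    · exact fun h => absurd h (by decide)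
    · exact fun _ => ⟨1, rfl⟩
    · exact fun h => absurd h (by decide)
  have tor : ∀ z : AdjoinRoot f, 2 * z = 0 → π z = 0 := by
    intro z hz
    obtain ⟨g, rfl⟩ := AdjoinRoot.mk_surjective z
    have h1 : AdjoinRoot.mk f (Polynomial.C 2 * g) = 0 := by
      rw [map_mul, hmkC2]; exact hz
    obtain ⟨h₁, hh⟩ := AdjoinRoot.mk_eq_zero.mp h1
    have h3 : f2 * h₁.map c2 = 0 := by
      have h3' := congrArg (Polynomial.map c2) hh
      rw [Polynomial.map_mul, Polynomial.map_mul, ← hf2, Polynomial.map_C] at h3'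
      have hc20 : c2 (2 : ZMod 4) = 0 := by decide
      rw [hc20, Polynomial.C_0, zero_mul] at h3'
      exact h3'.symm
    have h4' : h₁.map c2 = 0 := by
      rcases mul_eq_zero.mp h3 with h | h
      · exact absurd h hf2ne
      · exact h
    obtain ⟨h₂, hh2⟩ := hCdvd _ h4'
    have h5 : Polynomial.C 2 * (g - f * h₂) = 0 := by
      rw [hh2] at hh
      linear_combination hh
    have h6 : (Polynomial.C 2 : Polynomial (ZMod 4)) ∣ (g - f * h₂) := by
      rw [Polynomial.C_dvd_iff_dvd_coeff]
      intro i
      apply hdvd2'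
      have := congrArg (fun p => Polynomial.coeff p i) h5
      simpa using this
    obtain ⟨w, hw⟩ := h6
    have hg2 : AdjoinRoot.mk f g = 2 * AdjoinRoot.mk f w := by
      have h7 := congrArg (AdjoinRoot.mk f) hw
      rwa [map_sub, map_mul, AdjoinRoot.mk_self, zero_mul, sub_zero, map_mul, hmkC2] at h7
    rw [hg2, map_mul, hπ2, zero_mul]
  -- Teichmuller machinery
  have hmem2 : ∀ r : AdjoinRoot f, π r = 0 ↔ ∃ x, r = 2 * x := by
    intro r
    rw [hπd, Ideal.Quotient.eq_zero_iff_mem, hI, Ideal.mem_span_singleton]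
    exact ⟨fun ⟨c, hc⟩ => ⟨c, hc⟩, fun ⟨c, hc⟩ => ⟨c, hc⟩⟩
  have hpow2 : ∀ x y : AdjoinRoot f, π x = π y → x^(2^m) = y^(2^m) := by
    intro x y hxy
    have h0 : π (x - y) = 0 := by rw [map_sub, hxy, sub_self]
    obtain ⟨d, hd⟩ := (hmem2 _).mp h0
    have hx : x = y + 2*d := by linear_combination hd
    rw [hx]
    exact pow_congr_of_four h4 m hmpos y d
  have hpowcard : ∀ x : AdjoinRoot f ⧸ I, x^(2^m) = x := by
    intro x
    have := FiniteField.pow_card x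
    rwa [hcardk] at this
  have Tsurj : ∀ x : AdjoinRoot f ⧸ I, ∃ X : AdjoinRoot f, X^(2^m) = X ∧ π X = x := by
    intro x
    obtain ⟨r, rfl⟩ := Ideal.Quotient.mk_surjective x
    have hπr : π (r^(2^m)) = π r := by rw [map_pow]; exact hpowcard (π r)
    exact ⟨r^(2^m), hpow2 _ _ hπr, hπr⟩
  have Tinj : ∀ X Y : AdjoinRoot f, X^(2^m) = X → Y^(2^m) = Y → π X = π Y → X = Y := by
    intro X Y hX hY hXY
    rw [← hX, ← hY]
    exact hpow2 X Y hXY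
  have hDex : ∃ D, C = C^(2^m) + 2*D := by
    have h0 : π (C - C^(2^m)) = 0 := by rw [map_sub, map_pow, hpowcard, sub_self]
    obtain ⟨d, hd⟩ := (hmem2 _).mp h0
    exact ⟨d, by linear_combination hd⟩
  obtain ⟨D, hD⟩ := hDex
  have he2sq : ∀ x y z w : AdjoinRoot f ⧸ I,
      (x*y + x*z + x*w + y*z + y*w + z*w)^2 =
      x^2*y^2 + x^2*z^2 + x^2*w^2 + y^2*z^2 + y^2*w^2 + z^2*w^2 := by
    intro x y z w
    linear_combination (x*y*x*z + x*y*x*w + x*y*y*z + x*y*y*w + x*y*z*w + x*z*x*w + x*z*y*z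
      + x*z*y*w + x*z*z*w + x*w*y*z + x*w*y*w + x*w*z*w + y*z*y*w + y*z*z*w + y*w*z*w) * h2k
  have hsqinj : ∀ x y : AdjoinRoot f ⧸ I, x^2 = y^2 → x = y := by
    intro x y h
    have h0 : (x - y)^2 = 0 := by linear_combination h + (y*y - x*y) * h2k
    exact sub_eq_zero.mp (pow_eq_zero_iff (two_ne_zero) |>.mp h0)
  have hmm2 : 2^(m-1) * 2 = 2^m := by rw [← pow_succ, Nat.sub_add_cancel hmpos]
  have hkey : ∀ X Y Z W : AdjoinRoot f, (X+Y+Z+W)^(2^m) =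
      X^(2^m) + Y^(2^m) + Z^(2^m) + W^(2^m) +
      2*(X^(2^(m-1))*Y^(2^(m-1)) + X^(2^(m-1))*Z^(2^(m-1)) + X^(2^(m-1))*W^(2^(m-1)) +
         Y^(2^(m-1))*Z^(2^(m-1)) + Y^(2^(m-1))*W^(2^(m-1)) + Z^(2^(m-1))*W^(2^(m-1))) := by
    intro X Y Z W
    have := keypow h4 (m-1) X Y Z W
    rwa [Nat.sub_add_cancel hmpos] at this
  have hmain : ∀ X Y Z W : AdjoinRoot f, X^(2^m) = X → Y^(2^m) = Y → Z^(2^m) = Z →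
      W^(2^m) = W → ((X+Y+Z+W = C) ↔ (π X + π Y + π Z + π W = π C ∧
        π X * π Y + π X * π Z + π X * π W + π Y * π Z + π Y * π W + π Z * π W = (π D)^2)) := by
    intro X Y Z W hX hY hZ hW
    set E : AdjoinRoot f := X^(2^(m-1))*Y^(2^(m-1)) + X^(2^(m-1))*Z^(2^(m-1)) +
      X^(2^(m-1))*W^(2^(m-1)) + Y^(2^(m-1))*Z^(2^(m-1)) + Y^(2^(m-1))*W^(2^(m-1)) +
      Z^(2^(m-1))*W^(2^(m-1)) with hE
    have hkeyE : (X+Y+Z+W)^(2^m) = X+Y+Z+W + 2*E := by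
      rw [hkey X Y Z W, hX, hY, hZ, hW, hE]
    have hX'2 : (π (X^(2^(m-1))))^2 = π X := by
      rw [← map_pow, ← pow_mul, hmm2, hX]
    have hY'2 : (π (Y^(2^(m-1))))^2 = π Y := by
      rw [← map_pow, ← pow_mul, hmm2, hY]
    have hZ'2 : (π (Z^(2^(m-1))))^2 = π Z := by
      rw [← map_pow, ← pow_mul, hmm2, hZ]
    have hW'2 : (π (W^(2^(m-1))))^2 = π W := by
      rw [← map_pow, ← pow_mul, hmm2, hW]
    have hπE2 : (π E)^2 = π X * π Y + π X * π Z + π X * π W + π Y * π Z + π Y * π W +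
        π Z * π W := by
      rw [hE]
      simp only [map_add, map_mul]
      rw [he2sq, hX'2, hY'2, hZ'2, hW'2]
    constructor
    · intro hS
      have h1 : C^(2^m) = C + 2*E := by rw [← hS]; exact hkeyE
      have h2' : 2*(E + D) = 0 := by linear_combination h1 + hD + (E + D)*h4
      have hπED : π E = π D := by
        have h3 : π E + π D = 0 := by rw [← map_add]; exact tor _ h2'
        linear_combination h3 - (π D) * h2k
      refine ⟨by rw [← map_add, ← map_add, ← map_add, hS], ?_⟩
      rw [← hπE2, hπED]
    · rintro ⟨hsum, he2⟩
      have h1 : (X+Y+Z+W)^(2^m) = C^(2^m) := by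
        apply hpow2
        simp only [map_add]
        exact hsum
      have hπED : π E = π D := hsqinj _ _ (by rw [hπE2]; exact he2)
      have h2ED : 2*E = 2*D := by
        have h0 : π (E - D) = 0 := by rw [map_sub, hπED, sub_self]
        obtain ⟨t, ht⟩ := (hmem2 _).mp h0
        linear_combination 2*ht + t*h4
      linear_combination -hkeyE + h1 - hD + h2ED - E*h4
  -- the bijection
  have hNcard : Nat.card {t : AdjoinRoot f × AdjoinRoot f × AdjoinRoot f × AdjoinRoot f //
        t.1 ^ 2 ^ m = t.1 ∧ t.2.1 ^ 2 ^ m = t.2.1 ∧ t.2.2.1 ^ 2 ^ m = t.2.2.1 ∧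
        t.2.2.2 ^ 2 ^ m = t.2.2.2 ∧
        t.1 + t.2.1 + t.2.2.1 + t.2.2.2 = C} =
      Nat.card {s : (AdjoinRoot f ⧸ I) × (AdjoinRoot f ⧸ I) × (AdjoinRoot f ⧸ I) ×
          (AdjoinRoot f ⧸ I) // s.1 + s.2.1 + s.2.2.1 + s.2.2.2 = π C ∧
        s.1 * s.2.1 + s.1 * s.2.2.1 + s.1 * s.2.2.2 + s.2.1 * s.2.2.1 + s.2.1 * s.2.2.2 +
          s.2.2.1 * s.2.2.2 = (π D) ^ 2} := by
    refine Nat.card_congr (Equiv.ofBijective (fun t =>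
      ⟨(π t.1.1, π t.1.2.1, π t.1.2.2.1, π t.1.2.2.2), by
        obtain ⟨⟨X, Y, Z, W⟩, hX, hY, hZ, hW, hS⟩ := t
        exact (hmain X Y Z W hX hY hZ hW).mp hS⟩) ⟨?_, ?_⟩)
    · rintro ⟨⟨X, Y, Z, W⟩, hX, hY, hZ, hW, hS⟩ ⟨⟨X', Y', Z', W'⟩, hX', hY', hZ', hW', hS'⟩ h
      simp only [Subtype.mk.injEq, Prod.mk.injEq] at h
      refine Subtype.ext ?_
      simp only [Prod.mk.injEq]
      exact ⟨Tinj _ _ hX hX' h.1, Tinj _ _ hY hY' h.2.1, Tinj _ _ hZ hZ' h.2.2.1,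
        Tinj _ _ hW hW' h.2.2.2⟩
    · rintro ⟨⟨x, y, z, w⟩, hsum, he2⟩
      obtain ⟨X, hX, hπX⟩ := Tsurj x
      obtain ⟨Y, hY, hπY⟩ := Tsurj y
      obtain ⟨Z, hZ, hπZ⟩ := Tsurj z
      obtain ⟨W, hW, hπW⟩ := Tsurj w
      refine ⟨⟨(X, Y, Z, W), hX, hY, hZ, hW, (hmain X Y Z W hX hY hZ hW).mpr ?_⟩, ?_⟩
      · rw [hπX, hπY, hπZ, hπW]
        exact ⟨hsum, he2⟩
      · refine Subtype.ext ?_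
        simp only [Prod.mk.injEq]
        exact ⟨hπX, hπY, hπZ, hπW⟩
  rw [hNcard, field_count m hm hmpos hcardk (π C) (π D)]
  have hC2R : (∃ x : AdjoinRoot f, C = 2 * x) ↔ π C = 0 := (hmem2 C).symm
  have hC0 : (C = 0) ↔ (π C = 0 ∧ π D = 0) := by
    constructor
    · intro h
      subst h
      have h0 : (0 : AdjoinRoot f)^(2^m) = 0 := zero_pow (Nat.pow_pos (n := m) two_pos).ne'
      rw [h0, zero_add] at hD
      exact ⟨map_zero π, tor D hD.symm⟩
    · rintro ⟨hπC, hπD⟩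
      obtain ⟨c, hc⟩ := (hmem2 _).mp hπC
      have hsq0 : (2*c)^2 = 0 := by linear_combination (c*c)*h4
      have hCq0 : C^(2^m) = 0 := by
        rw [hc, ← hmm2, mul_comm (2^(m-1)) 2, pow_mul, hsq0]
        exact zero_pow (Nat.pow_pos (n := m-1) two_pos).ne'
      obtain ⟨d, hd⟩ := (hmem2 _).mp hπD
      linear_combination hD + hCq0 + 2*hd + d*h4
  by_cases hC : C = 0
  · rw [if_pos hC, if_pos (hC0.mp hC)]
  · rw [if_neg hC]
    by_cases hC2 : ∃ x : AdjoinRoot f, C = 2 * x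
    · rw [if_pos hC2, if_neg (fun h => hC (hC0.mpr h)), if_pos (hC2R.mp hC2)]
    · rw [if_neg hC2, if_neg (fun h : π C = 0 ∧ π D = 0 => hC2 (hC2R.mpr h.1)),
        if_neg (fun h => hC2 (hC2R.mpr h))]
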